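/- Conversely, if a local CA rule f : {0,1}^3 → {0,1} is number-conserving on cyclic configurations of every length L ≥ 1, then the function J(x0,x1) := -f(0,0,x0) - f(0,x0,x1) + x0 satisfies f(x0,x1,x2) - x1 = J(x0,x1) - J(x1,x2) for all x0,x1,x2 ∈ {0,1}. -/

import Mathlib

lemma sum_zmod_one (g : ZMod 1 → ℤ) : ∑ i, g i = g 0 := Fin.sum_univ_one g
lemma sum_zmod_three (g : ZMod 3 → ℤ) : ∑ i, g i = g 0 + g 1 + g 2 :=
  Fin.sum_univ_three g
lemma sum_zmod_four (g : ZMod 4 → ℤ) : ∑ i, g i = g 0 + g 1 + g 2 + g 3 :=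
  Fin.sum_univ_four g

/-- Conversely, if a binary local rule f is number-conserving on cyclic
configurations of every length, then J(x0,x1) = -f(0,0,x0) - f(0,x0,x1) + x0
satisfies the discrete conservation law. -/
theorem number_conserving_implies_current
    (f : ℤ → ℤ → ℤ → ℤ)
    (hf : ∀ x0 x1 x2 : ℤ, (x0 = 0 ∨ x0 = 1) → (x1 = 0 ∨ x1 = 1) →
      (x2 = 0 ∨ x2 = 1) → (f x0 x1 x2 = 0 ∨ f x0 x1 x2 = 1))
    (hcons : ∀ (L : ℕ) [NeZero L] (s : ZMod L → ℤ),
      (∀ i, s i = 0 ∨ s i = 1) →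
      ∑ i : ZMod L, f (s (i - 1)) (s i) (s (i + 1)) = ∑ i : ZMod L, s i) :
    ∀ x0 x1 x2 : ℤ, (x0 = 0 ∨ x0 = 1) → (x1 = 0 ∨ x1 = 1) →
      (x2 = 0 ∨ x2 = 1) →
      f x0 x1 x2 - x1 =
        (-f 0 0 x0 - f 0 x0 x1 + x0) - (-f 0 0 x1 - f 0 x1 x2 + x1) := by
  have E1 : f 0 0 0 = 0 := by
    have h := hcons 1 (fun _ => 0) (fun _ => Or.inl rfl)
    rw [sum_zmod_one, sum_zmod_one] at h
    exact h
  have E2 : f 1 1 1 = 1 := by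
    have h := hcons 1 (fun _ => 1) (fun _ => Or.inr rfl)
    rw [sum_zmod_one, sum_zmod_one] at h
    exact h
  have E3 : f 0 1 0 + f 1 0 0 + f 0 0 1 = 1 := by
    have h := hcons 3 (fun i : ZMod 3 => if i = 0 then 1 else 0) (by decide)
    rw [sum_zmod_three, sum_zmod_three] at h
    exact h
  have E4 : f 0 1 0 + f 1 0 1 + f 0 1 0 + f 1 0 1 = 1 + 0 + 1 + 0 := by
    have h := hcons 4 (fun i : ZMod 4 => if i = 0 ∨ i = 2 then 1 else 0) (by decide)
    rw [sum_zmod_four, sum_zmod_four] at h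
    exact h
  have E5 : f 0 1 1 + f 1 1 0 + f 1 0 0 + f 0 0 1 = 1 + 1 + 0 + 0 := by
    have h := hcons 4 (fun i : ZMod 4 => if i = 0 ∨ i = 1 then 1 else 0) (by decide)
    rw [sum_zmod_four, sum_zmod_four] at h
    exact h
  rintro x0 x1 x2 (rfl | rfl) (rfl | rfl) (rfl | rfl) <;> linarith
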